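/- For every p > 0 and τ ≥ 0, the smoothed function L̄_2 : ℝ → ℝ, L̄_2(ξ) = (1/2)·max(0, ξ² − τ²) + (1/(2p))·log(1 + exp(−p·|ξ² − τ²|)), is convex on ℝ. -/

import Mathlib

open Real

lemma softplus_deriv (x : ℝ) :
    HasDerivAt (fun t : ℝ => Real.log (1 + Real.exp t)) (Real.exp x / (1 + Real.exp x)) x := by
  have h1 : (0:ℝ) < 1 + Real.exp x := by positivity
  have : HasDerivAt (fun t : ℝ => 1 + Real.exp t) (Real.exp x) x :=
    (Real.hasDerivAt_exp x).const_add 1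
  simpa using this.log h1.ne'

lemma softplus_convex : ConvexOn ℝ Set.univ (fun t : ℝ => Real.log (1 + Real.exp t)) := by
  have hdiff : Differentiable ℝ (fun t : ℝ => Real.log (1 + Real.exp t)) :=
    fun x => (softplus_deriv x).differentiableAt
  apply Monotone.convexOn_univ_of_deriv hdiff
  have hderiv : deriv (fun t : ℝ => Real.log (1 + Real.exp t))
      = fun x => Real.exp x / (1 + Real.exp x) := by
    ext x; exact (softplus_deriv x).deriv
  rw [hderiv]
  intro a b hab
  have ha : (0:ℝ) < 1 + Real.exp a := by positivity
  have hb : (0:ℝ) < 1 + Real.exp b := by positivity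
  rw [div_le_div_iff₀ ha hb]
  have := Real.exp_le_exp.mpr hab
  nlinarith

lemma softplus_split (t : ℝ) :
    Real.log (1 + Real.exp t) = max 0 t + Real.log (1 + Real.exp (-|t|)) := by
  rcases le_or_gt 0 t with h | h
  · rw [abs_of_nonneg h, max_eq_right h]
    have : (1 : ℝ) + Real.exp t = Real.exp t * (1 + Real.exp (-t)) := by
      rw [mul_add, mul_one, ← Real.exp_add]; simp [add_comm]
    rw [this, Real.log_mul (Real.exp_ne_zero t) (by positivity), Real.log_exp]
  · rw [abs_of_neg h, max_eq_left h.le, neg_neg, zero_add]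

/-- For every p > 0 and τ ≥ 0, the smoothed function
    L̄_2(ξ) = (1/2)·max(0, ξ² − τ²) + (1/(2p))·log(1 + exp(−p·|ξ² − τ²|))
    is convex on ℝ. -/
theorem smoothed_L2_convex (p τ : ℝ) (hp : 0 < p) (hτ : 0 ≤ τ) :
    ConvexOn ℝ Set.univ
      (fun ξ : ℝ => 1 / 2 * max 0 (ξ ^ 2 - τ ^ 2)
        + 1 / (2 * p) * Real.log (1 + Real.exp (-p * |ξ ^ 2 - τ ^ 2|))) := by
  have key : ∀ ξ : ℝ, 1 / 2 * max 0 (ξ ^ 2 - τ ^ 2)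
        + 1 / (2 * p) * Real.log (1 + Real.exp (-p * |ξ ^ 2 - τ ^ 2|))
      = 1 / (2 * p) * Real.log (1 + Real.exp (p * (ξ ^ 2 - τ ^ 2))) := by
    intro ξ
    have h := softplus_split (p * (ξ ^ 2 - τ ^ 2))
    have hmax : max 0 (p * (ξ ^ 2 - τ ^ 2)) = p * max 0 (ξ ^ 2 - τ ^ 2) := by
      rcases le_or_gt 0 (ξ ^ 2 - τ ^ 2) with h' | h'
      · rw [max_eq_right h', max_eq_right (by positivity)]
      · rw [max_eq_left h'.le, max_eq_left (by nlinarith), mul_zero]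
    have habs : |p * (ξ ^ 2 - τ ^ 2)| = p * |ξ ^ 2 - τ ^ 2| := by
      rw [abs_mul, abs_of_pos hp]
    rw [h, hmax, habs]
    field_simp
  simp only [key]
  -- now convexity of ξ ↦ (1/(2p)) * softplus (p (ξ² − τ²))
  have hsq : ConvexOn ℝ Set.univ (fun ξ : ℝ => p * (ξ ^ 2 - τ ^ 2)) := by
    have h1 : ConvexOn ℝ Set.univ (fun ξ : ℝ => ξ ^ 2) := by
      simpa using (even_two.convexOn_pow : ConvexOn ℝ Set.univ fun ξ : ℝ => ξ ^ 2)
    have := ((h1.smul hp.le).add_const (p * (-τ ^ 2)))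
    have e : (fun ξ : ℝ => p * (ξ ^ 2 - τ ^ 2)) = ((fun x => p • x ^ 2) + fun x => p * -τ ^ 2) := by
      funext ξ; simp [smul_eq_mul]; ring
    rw [e]; exact this
  have hmono : Monotone (fun t : ℝ => Real.log (1 + Real.exp t)) := by
    intro a b hab
    apply Real.log_le_log (by positivity)
    have := Real.exp_le_exp.mpr hab
    linarith
  have hcomp : ConvexOn ℝ Set.univ
      (fun ξ : ℝ => Real.log (1 + Real.exp (p * (ξ ^ 2 - τ ^ 2)))) := by
    refine ⟨convex_univ, fun x _ y _ a b ha hb hab => ?_⟩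
    calc Real.log (1 + Real.exp (p * ((a • x + b • y) ^ 2 - τ ^ 2)))
        ≤ Real.log (1 + Real.exp (a • (p * (x ^ 2 - τ ^ 2)) + b • (p * (y ^ 2 - τ ^ 2)))) :=
          hmono (hsq.2 (Set.mem_univ x) (Set.mem_univ y) ha hb hab)
      _ ≤ a • Real.log (1 + Real.exp (p * (x ^ 2 - τ ^ 2)))
            + b • Real.log (1 + Real.exp (p * (y ^ 2 - τ ^ 2))) :=
          softplus_convex.2 (Set.mem_univ _) (Set.mem_univ _) ha hb hab
  have := hcomp.smul (show (0:ℝ) ≤ 1 / (2 * p) by positivity)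
  simpa [smul_eq_mul] using this
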